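/- Let H and L be real Hilbert spaces, Φ : H → L a bounded linear operator with adjoint Φ*, A ⊆ H a proximal symmetric set containing 0 (e.g. a proximal union of linear subspaces), and μ > 0, α > 0 with α < 1/μ < 1.5·α. Assume for all x₁, x₂ ∈ A: α‖x₁ + x₂‖² ≤ ‖Φ(x₁ + x₂)‖² ≤ (1/μ)‖x₁ + x₂‖². Let x ∈ H and e ∈ L be arbitrary and set y = Φx + e. Let x_A ∈ A be a best approximation of x in A and set e_A = y − Φx_A; assume x_A ≠ 0 and e_A ≠ 0, and let δ > 0 satisfy δ‖e_A‖ < ‖x_A‖. Let (xⁿ) be the Iterative Projection Algorithm sequence: x⁰ = 0 and xⁿ⁺¹ ∈ A a best approximation in A to xⁿ + μΦ*(y − Φxⁿ). Then for every natural number n ≥ 2·ln(δ‖e_A‖/‖x_A‖)/ln(2/(μα) − 2), one has ‖x − xⁿ‖ ≤ (√c + δ)·‖e_A‖ + ‖x_A − x‖, where c = 4/(3α − 2/μ). -/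

import Mathlib

open scoped RealInnerProductSpace

set_option maxHeartbeats 800000 in
lemma step_key {H L : Type*} [NormedAddCommGroup H] [InnerProductSpace ℝ H] [CompleteSpace H]
    [NormedAddCommGroup L] [InnerProductSpace ℝ L] [CompleteSpace L]
    (Φ : H →L[ℝ] L) (μ α : ℝ) (hμ : 0 < μ) (hα : 0 < α)
    (b d : H) (e : L)
    (hupper : μ * ‖Φ (d + b)‖ ^ 2 ≤ ‖d + b‖ ^ 2)
    (hlowb : α * ‖b‖ ^ 2 ≤ ‖Φ b‖ ^ 2)
    (hlowd : α * ‖d‖ ^ 2 ≤ ‖Φ d‖ ^ 2)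
    (hbest : ‖(d + b) - μ • (ContinuousLinearMap.adjoint Φ) (Φ b + e)‖ ≤
             ‖b - μ • (ContinuousLinearMap.adjoint Φ) (Φ b + e)‖) :
    ‖d‖ ^ 2 ≤ (2 / (μ * α) - 2) * ‖b‖ ^ 2 + (4 / α) * ‖e‖ ^ 2 := by
  set w : H := μ • (ContinuousLinearMap.adjoint Φ) (Φ b + e) with hw
  have h1 : ‖(d + b) - w‖ ^ 2 ≤ ‖b - w‖ ^ 2 := pow_le_pow_left₀ (norm_nonneg _) hbest 2
  have hiw : ∀ v : H, ⟪v, w⟫ = μ * (⟪Φ v, Φ b⟫ + ⟪Φ v, e⟫) := by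
    intro v
    rw [hw, real_inner_smul_right, ContinuousLinearMap.adjoint_inner_right, inner_add_right]
  have e1 : ‖(d + b) - w‖ ^ 2 = ‖d + b‖ ^ 2 - 2 * ⟪d + b, w⟫ + ‖w‖ ^ 2 := norm_sub_sq_real _ _
  have e2 : ‖b - w‖ ^ 2 = ‖b‖ ^ 2 - 2 * ⟪b, w⟫ + ‖w‖ ^ 2 := norm_sub_sq_real _ _
  have hΦa : Φ (d + b) = Φ d + Φ b := map_add _ _ _
  have e3 : ⟪Φ (d + b), Φ b⟫ = ⟪Φ d, Φ b⟫ + ⟪Φ b, Φ b⟫ := by rw [hΦa, inner_add_left]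
  have e4 : ⟪Φ (d + b), e⟫ = ⟪Φ d, e⟫ + ⟪Φ b, e⟫ := by rw [hΦa, inner_add_left]
  have e5 : μ * ‖Φ (d + b)‖ ^ 2 = μ * ‖Φ d‖ ^ 2 + 2 * μ * ⟪Φ d, Φ b⟫ + μ * ‖Φ b‖ ^ 2 := by
    have : ‖Φ d + Φ b‖ ^ 2 = ‖Φ d‖ ^ 2 + 2 * ⟪Φ d, Φ b⟫ + ‖Φ b‖ ^ 2 := norm_add_sq_real _ _
    rw [hΦa]; linear_combination μ * this
  have key : ‖d + b‖ ^ 2 - 2 * μ * ⟪Φ d, Φ b⟫ - 2 * μ * ⟪Φ d, e⟫ ≤ ‖b‖ ^ 2 := by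
    rw [e1, e2, hiw (d + b), hiw b, e3, e4] at h1
    linarith [h1]
  have hcs : ⟪Φ d, e⟫ ≤ ‖Φ d‖ * ‖e‖ := real_inner_le_norm _ _
  have hsq : 2 * (‖Φ d‖ * ‖e‖) ≤ (1 / 2) * ‖Φ d‖ ^ 2 + 2 * ‖e‖ ^ 2 := by
    nlinarith [sq_nonneg (‖Φ d‖ - 2 * ‖e‖)]
  have hb' : μ * (α * ‖b‖ ^ 2) ≤ μ * ‖Φ b‖ ^ 2 := mul_le_mul_of_nonneg_left hlowb hμ.le
  have hd' : μ * (α * ‖d‖ ^ 2) ≤ μ * ‖Φ d‖ ^ 2 := mul_le_mul_of_nonneg_left hlowd hμ.le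
  have hce : μ * (2 * (‖Φ d‖ * ‖e‖)) ≤ μ * ((1 / 2) * ‖Φ d‖ ^ 2 + 2 * ‖e‖ ^ 2) :=
    mul_le_mul_of_nonneg_left hsq hμ.le
  have hce2 : μ * ⟪Φ d, e⟫ ≤ μ * (‖Φ d‖ * ‖e‖) := mul_le_mul_of_nonneg_left hcs hμ.le
  have main : μ * α * ‖d‖ ^ 2 ≤ 2 * (1 - μ * α) * ‖b‖ ^ 2 + 4 * μ * ‖e‖ ^ 2 := by
    linarith [key, e5, hupper, hb', hd', hce, hce2]
  have hpos : (0:ℝ) < μ * α := mul_pos hμ hα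
  rw [show (2 / (μ * α) - 2) * ‖b‖ ^ 2 + (4 / α) * ‖e‖ ^ 2
      = (2 * (1 - μ * α) * ‖b‖ ^ 2 + 4 * μ * ‖e‖ ^ 2) / (μ * α) by
    field_simp]
  rw [le_div_iff₀ hpos]
  linarith [main]

set_option maxHeartbeats 1600000 in
/-- the main recovery theorem for the Iterative Projection Algorithm. -/
theorem stmt_8
    {H L : Type*} [NormedAddCommGroup H] [InnerProductSpace ℝ H] [CompleteSpace H]
    [NormedAddCommGroup L] [InnerProductSpace ℝ L] [CompleteSpace L]
    (Φ : H →L[ℝ] L) (A : Set H)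
    (hzero : (0 : H) ∈ A) (hsym : ∀ x ∈ A, -x ∈ A)
    (hprox : ∀ z : H, ∃ a ∈ A, ∀ b ∈ A, ‖z - a‖ ≤ ‖z - b‖)
    (μ α : ℝ) (hμ : 0 < μ) (hα : 0 < α)
    (hcond₁ : α < 1 / μ) (hcond₂ : 1 / μ < 1.5 * α)
    (hbi : ∀ x₁ ∈ A, ∀ x₂ ∈ A,
      α * ‖x₁ + x₂‖ ^ 2 ≤ ‖Φ (x₁ + x₂)‖ ^ 2 ∧ ‖Φ (x₁ + x₂)‖ ^ 2 ≤ (1 / μ) * ‖x₁ + x₂‖ ^ 2)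
    (x : H) (e : L) (y : L) (hy : y = Φ x + e)
    (xA : H) (hxA : xA ∈ A) (hxAbest : ∀ z ∈ A, ‖x - xA‖ ≤ ‖x - z‖)
    (eA : L) (heA : eA = y - Φ xA)
    (hxA0 : xA ≠ 0) (heA0 : eA ≠ 0)
    (δ : ℝ) (hδ : 0 < δ) (hδsmall : δ * ‖eA‖ < ‖xA‖)
    (xseq : ℕ → H) (hinit : xseq 0 = 0)
    (hstep : ∀ n, xseq (n + 1) ∈ A ∧ ∀ z ∈ A,
      ‖xseq (n + 1) - (xseq n + μ • (ContinuousLinearMap.adjoint Φ) (y - Φ (xseq n)))‖ ≤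
      ‖z - (xseq n + μ • (ContinuousLinearMap.adjoint Φ) (y - Φ (xseq n)))‖) :
    ∀ n : ℕ, (n : ℝ) ≥ 2 * Real.log (δ * ‖eA‖ / ‖xA‖) / Real.log (2 / (μ * α) - 2) →
      ‖x - xseq n‖ ≤ (Real.sqrt (4 / (3 * α - 2 / μ)) + δ) * ‖eA‖ + ‖xA - x‖ := by
  set ρ : ℝ := 2 / (μ * α) - 2 with hρ
  set c : ℝ := 4 / (3 * α - 2 / μ) with hc
  have hμα : μ * α < 1 := by
    have := (lt_div_iff₀ hμ).mp hcond₁; linarith [this]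
  have hμα' : 2 < 3 * (μ * α) := by
    have := (div_lt_iff₀ hμ).mp hcond₂; nlinarith [this]
  have hpos : (0:ℝ) < μ * α := mul_pos hμ hα
  have hρpos : 0 < ρ := by
    rw [hρ, sub_pos, lt_div_iff₀ hpos]; linarith
  have hρlt1 : ρ < 1 := by
    rw [hρ, sub_lt_iff_lt_add, div_lt_iff₀ hpos]; linarith
  have hden : 0 < 3 * α - 2 / μ := by
    have h2 : 2 / μ < 3 * α := by
      have : 1 / μ < 1.5 * α := hcond₂
      calc 2 / μ = 2 * (1 / μ) := by ring
        _ < 2 * (1.5 * α) := by linarith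
        _ = 3 * α := by ring
    linarith
  have hcpos : 0 < c := by rw [hc]; positivity
  -- membership of the iterates
  have hmem : ∀ n, xseq n ∈ A := by
    intro n
    cases n with
    | zero => rw [hinit]; exact hzero
    | succ m => exact (hstep m).1
  -- bi-Lipschitz bounds for differences of elements of A
  have hdiff : ∀ u ∈ A, ∀ v ∈ A,
      α * ‖u - v‖ ^ 2 ≤ ‖Φ (u - v)‖ ^ 2 ∧ ‖Φ (u - v)‖ ^ 2 ≤ (1 / μ) * ‖u - v‖ ^ 2 := by
    intro u hu v hv
    have := hbi u hu (-v) (hsym v hv)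
    rwa [← sub_eq_add_neg] at this
  -- one-step contraction
  have key : ∀ n, ‖xseq (n + 1) - xA‖ ^ 2 ≤ ρ * ‖xA - xseq n‖ ^ 2 + (4 / α) * ‖eA‖ ^ 2 := by
    intro n
    set b : H := xA - xseq n with hb
    set d : H := xseq (n + 1) - xA with hd
    have hdb : d + b = xseq (n + 1) - xseq n := by rw [hd, hb]; abel
    have hupper : μ * ‖Φ (d + b)‖ ^ 2 ≤ ‖d + b‖ ^ 2 := by
      have h := (hdiff (xseq (n + 1)) (hmem (n + 1)) (xseq n) (hmem n)).2
      rw [hdb]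
      rw [div_mul_eq_mul_div, le_div_iff₀ hμ] at h
      linarith [h]
    have hlowb : α * ‖b‖ ^ 2 ≤ ‖Φ b‖ ^ 2 := by
      rw [hb]; exact (hdiff xA hxA (xseq n) (hmem n)).1
    have hlowd : α * ‖d‖ ^ 2 ≤ ‖Φ d‖ ^ 2 := by
      rw [hd]; exact (hdiff (xseq (n + 1)) (hmem (n + 1)) xA hxA).1
    have hr : y - Φ (xseq n) = Φ b + eA := by
      rw [hb, map_sub]
      have : y = Φ xA + eA := by rw [heA]; abel
      rw [this]; abel
    have hbest : ‖(d + b) - μ • (ContinuousLinearMap.adjoint Φ) (Φ b + eA)‖ ≤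
        ‖b - μ • (ContinuousLinearMap.adjoint Φ) (Φ b + eA)‖ := by
      have h := (hstep n).2 xA hxA
      rw [hr] at h
      have e1 : xseq (n + 1) - (xseq n + μ • (ContinuousLinearMap.adjoint Φ) (Φ b + eA))
          = (d + b) - μ • (ContinuousLinearMap.adjoint Φ) (Φ b + eA) := by
        rw [hdb]; abel
      have e2 : xA - (xseq n + μ • (ContinuousLinearMap.adjoint Φ) (Φ b + eA))
          = b - μ • (ContinuousLinearMap.adjoint Φ) (Φ b + eA) := by
        rw [hb]; abel
      rwa [e1, e2] at h
    have := step_key Φ μ α hμ hα b d eA hupper hlowb hlowd hbest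
    rw [hρ]; exact this
  -- geometric decay
  have hiter : ∀ n, ‖xA - xseq n‖ ^ 2 ≤ ρ ^ n * ‖xA‖ ^ 2 + c * ‖eA‖ ^ 2 := by
    intro n
    induction n with
    | zero =>
      rw [hinit, sub_zero, pow_zero, one_mul]
      nlinarith [mul_pos hcpos (pow_pos (norm_pos_iff.mpr heA0) 2)]
    | succ m ih =>
      have h1 := key m
      have h2 : ρ * ‖xA - xseq m‖ ^ 2 ≤ ρ * (ρ ^ m * ‖xA‖ ^ 2 + c * ‖eA‖ ^ 2) :=
        mul_le_mul_of_nonneg_left ih hρpos.le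
      have hcc : ρ * c + 4 / α = c := by
        have h4 : 3 * (μ * α) - 2 ≠ 0 := by intro h; rw [sub_eq_zero] at h; linarith
        have h6 : 3 * α * μ - 2 ≠ 0 := by intro h; apply h4; rw [← h]; ring
        have h7 : μ * α * (3 * α * μ - 2) ≠ 0 := mul_ne_zero (ne_of_gt hpos) h6
        have h1' : (3 * α - 2 / μ) ≠ 0 := ne_of_gt hden
        have h2' : μ ≠ 0 := ne_of_gt hμ
        have h3' : α ≠ 0 := ne_of_gt hα
        rw [hρ, hc]
        field_simp
        have h9 : μ * α * 3 - 2 ≠ 0 := by intro h; apply h4; linarith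
        rw [div_add_one h9]
        ring
      have h3 : ‖xA - xseq (m + 1)‖ ^ 2 = ‖xseq (m + 1) - xA‖ ^ 2 := by
        rw [norm_sub_rev]
      rw [h3]
      calc ‖xseq (m + 1) - xA‖ ^ 2 ≤ ρ * ‖xA - xseq m‖ ^ 2 + (4 / α) * ‖eA‖ ^ 2 := h1
        _ ≤ ρ * (ρ ^ m * ‖xA‖ ^ 2 + c * ‖eA‖ ^ 2) + (4 / α) * ‖eA‖ ^ 2 :=
          add_le_add_left h2 _
        _ = ρ ^ (m + 1) * ‖xA‖ ^ 2 + (ρ * c + 4 / α) * ‖eA‖ ^ 2 := by ring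
        _ = ρ ^ (m + 1) * ‖xA‖ ^ 2 + c * ‖eA‖ ^ 2 := by rw [hcc]
  -- finish
  intro n hn
  have hE : 0 < ‖eA‖ := norm_pos_iff.mpr heA0
  have hX : 0 < ‖xA‖ := norm_pos_iff.mpr hxA0
  set q : ℝ := δ * ‖eA‖ / ‖xA‖ with hq
  have hqpos : 0 < q := by positivity
  have hq1 : q < 1 := (div_lt_one hX).mpr hδsmall
  have hlogρ : Real.log ρ < 0 := Real.log_neg hρpos hρlt1
  have hnl : (n : ℝ) * Real.log ρ ≤ 2 * Real.log q := by
    have := (div_le_iff_of_neg hlogρ).mp hn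
    linarith [this]
  have hρn : ρ ^ n ≤ q ^ 2 := by
    have h1 : ρ ^ n = Real.exp ((n : ℝ) * Real.log ρ) := by
      rw [← Real.log_pow, Real.exp_log (pow_pos hρpos n)]
    have h2 : q ^ 2 = Real.exp (2 * Real.log q) := by
      have : Real.log (q ^ 2) = 2 * Real.log q := by
        rw [Real.log_pow]; norm_num
      rw [← this, Real.exp_log (pow_pos hqpos 2)]
    rw [h1, h2]
    exact Real.exp_le_exp.mpr hnl
  have hsqrtρn : Real.sqrt (ρ ^ n) * ‖xA‖ ≤ δ * ‖eA‖ := by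
    have h1 : Real.sqrt (ρ ^ n) ≤ q := by
      calc Real.sqrt (ρ ^ n) ≤ Real.sqrt (q ^ 2) := Real.sqrt_le_sqrt hρn
        _ = q := Real.sqrt_sq hqpos.le
    calc Real.sqrt (ρ ^ n) * ‖xA‖ ≤ q * ‖xA‖ :=
          mul_le_mul_of_nonneg_right h1 hX.le
      _ = δ * ‖eA‖ := by rw [hq]; field_simp
  -- bound ‖xA - xseq n‖
  have hbound : ‖xA - xseq n‖ ≤ δ * ‖eA‖ + Real.sqrt c * ‖eA‖ := by
    have h1 : ‖xA - xseq n‖ ≤ Real.sqrt (ρ ^ n * ‖xA‖ ^ 2 + c * ‖eA‖ ^ 2) := by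
      have := hiter n
      calc ‖xA - xseq n‖ = Real.sqrt (‖xA - xseq n‖ ^ 2) :=
            (Real.sqrt_sq (norm_nonneg _)).symm
        _ ≤ Real.sqrt (ρ ^ n * ‖xA‖ ^ 2 + c * ‖eA‖ ^ 2) := Real.sqrt_le_sqrt this
    have h2 : Real.sqrt (ρ ^ n * ‖xA‖ ^ 2 + c * ‖eA‖ ^ 2)
        ≤ Real.sqrt (ρ ^ n * ‖xA‖ ^ 2) + Real.sqrt (c * ‖eA‖ ^ 2) := by
      set X := ρ ^ n * ‖xA‖ ^ 2
      set Y := c * ‖eA‖ ^ 2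
      have hXnn : 0 ≤ X := by positivity
      have hYnn : 0 ≤ Y := by positivity
      have : X + Y ≤ (Real.sqrt X + Real.sqrt Y) ^ 2 := by
        nlinarith [Real.sq_sqrt hXnn, Real.sq_sqrt hYnn, Real.sqrt_nonneg X, Real.sqrt_nonneg Y]
      calc Real.sqrt (X + Y) ≤ Real.sqrt ((Real.sqrt X + Real.sqrt Y) ^ 2) :=
            Real.sqrt_le_sqrt this
        _ = Real.sqrt X + Real.sqrt Y := Real.sqrt_sq (by positivity)
    have h3 : Real.sqrt (ρ ^ n * ‖xA‖ ^ 2) = Real.sqrt (ρ ^ n) * ‖xA‖ := by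
      rw [Real.sqrt_mul (by positivity), Real.sqrt_sq (norm_nonneg _)]
    have h4 : Real.sqrt (c * ‖eA‖ ^ 2) = Real.sqrt c * ‖eA‖ := by
      rw [Real.sqrt_mul hcpos.le, Real.sqrt_sq (norm_nonneg _)]
    rw [h3, h4] at h2
    linarith [h1, h2, hsqrtρn]
  have htri : ‖x - xseq n‖ ≤ ‖xA - x‖ + ‖xA - xseq n‖ := by
    have : x - xseq n = (x - xA) + (xA - xseq n) := by abel
    rw [this]
    calc ‖(x - xA) + (xA - xseq n)‖ ≤ ‖x - xA‖ + ‖xA - xseq n‖ := norm_add_le _ _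
      _ = ‖xA - x‖ + ‖xA - xseq n‖ := by rw [norm_sub_rev]
  calc ‖x - xseq n‖ ≤ ‖xA - x‖ + ‖xA - xseq n‖ := htri
    _ ≤ ‖xA - x‖ + (δ * ‖eA‖ + Real.sqrt c * ‖eA‖) := by linarith [hbound]
    _ = (Real.sqrt c + δ) * ‖eA‖ + ‖xA - x‖ := by ring
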